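/- Let f : ℝⁿ → ℝ be C¹, {x^k} ⊂ ℝⁿ a sequence converging to x̄, and {d^k} ⊂ ℝⁿ a bounded sequence of directions with ∇f(x^k)ᵀd^k < 0 for all k. For each k let λ^k ∈ (0,1] be the Armijo steplength, i.e., the largest λ ∈ {1, δ, δ², …} with f(x^k + λd^k) ≤ f(x^k) + βλ∇f(x^k)ᵀd^k, where β, δ ∈ (0,1). If f(x^k) − f(x^k + λ^k d^k) → 0 as k → ∞, then ∇f(x^k)ᵀd^k → 0. -/

import Mathlib

open scoped RealInnerProductSpace
open Filter

private lemma grad_cont {n : ℕ} (f : EuclideanSpace ℝ (Fin n) → ℝ) (hf : ContDiff ℝ 1 f) :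
    Continuous (gradient f) := by
  unfold gradient
  exact (InnerProductSpace.toDual ℝ _).symm.continuous.comp (hf.continuous_fderiv one_ne_zero)

private lemma grad_inner {n : ℕ} (f : EuclideanSpace ℝ (Fin n) → ℝ)
    (p v : EuclideanSpace ℝ (Fin n)) :
    ⟪gradient f p, v⟫ = fderiv ℝ f p v := by
  simp [gradient, InnerProductSpace.toDual_symm_apply]

private lemma mvt_aux {n : ℕ} (f : EuclideanSpace ℝ (Fin n) → ℝ) (hf : ContDiff ℝ 1 f)
    (p v : EuclideanSpace ℝ (Fin n)) (μ : ℝ) (hμ : 0 < μ) :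
    ∃ c, 0 < c ∧ c < μ ∧ ⟪gradient f (p + c • v), v⟫ = (f (p + μ • v) - f p) / μ := by
  have hderiv : ∀ t : ℝ, HasDerivAt (fun t : ℝ => f (p + t • v))
      (⟪gradient f (p + t • v), v⟫) t := by
    intro t
    have h1 : HasDerivAt (fun t : ℝ => p + t • v) v t := by
      simpa using ((hasDerivAt_id t).smul_const v).const_add p
    have h2 : HasFDerivAt f (fderiv ℝ f (p + t • v)) (p + t • v) :=
      (hf.differentiable one_ne_zero (p + t • v)).hasFDerivAt
    have h3 := h2.comp_hasDerivAt t h1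
    rw [grad_inner]
    exact h3
  obtain ⟨c, hc, hcs⟩ := exists_hasDerivAt_eq_slope (fun t : ℝ => f (p + t • v))
    (fun t : ℝ => ⟪gradient f (p + t • v), v⟫) hμ
    (fun t _ => (hderiv t).continuousAt.continuousWithinAt)
    (fun t _ => hderiv t)
  refine ⟨c, hc.1, hc.2, ?_⟩
  simp only [zero_smul, add_zero, sub_zero] at hcs
  exact hcs

theorem statement9 {n : ℕ} (f : EuclideanSpace ℝ (Fin n) → ℝ) (hf : ContDiff ℝ 1 f)
    (x : ℕ → EuclideanSpace ℝ (Fin n)) (xbar : EuclideanSpace ℝ (Fin n))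
    (hx : Tendsto x atTop (nhds xbar))
    (d : ℕ → EuclideanSpace ℝ (Fin n)) (M : ℝ) (hM : 0 < M)
    (hbd : ∀ k, ‖d k‖ ≤ M)
    (hdesc : ∀ k, ⟪gradient f (x k), d k⟫ < 0)
    (β δ : ℝ) (hβ : β ∈ Set.Ioo (0 : ℝ) 1) (hδ : δ ∈ Set.Ioo (0 : ℝ) 1)
    (j : ℕ → ℕ)
    (harmijo : ∀ k, f (x k + δ ^ j k • d k) ≤
      f (x k) + β * δ ^ j k * ⟪gradient f (x k), d k⟫)
    (hlargest : ∀ k, ∀ j' < j k,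
      ¬ (f (x k + δ ^ j' • d k) ≤ f (x k) + β * δ ^ j' * ⟪gradient f (x k), d k⟫))
    (hdiff : Tendsto (fun k => f (x k) - f (x k + δ ^ j k • d k)) atTop (nhds 0)) :
    Tendsto (fun k => ⟪gradient f (x k), d k⟫) atTop (nhds 0) := by
  obtain ⟨hb0, hb1⟩ := hβ
  obtain ⟨hd0, hd1⟩ := hδ
  set g : ℕ → ℝ := fun k => ⟪gradient f (x k), d k⟫ with hg
  have hGc : Continuous (gradient f) := grad_cont f hf
  -- choice of MVT points for each k with j k ≥ 1
  have hmvt : ∀ k, 1 ≤ j k → ∃ c, 0 < c ∧ c < δ ^ (j k - 1) ∧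
      ⟪gradient f (x k + c • d k), d k⟫ > β * g k := by
    intro k hk
    obtain ⟨c, hc0, hcm, hcs⟩ := mvt_aux f hf (x k) (d k) (δ ^ (j k - 1))
      (pow_pos hd0 _)
    refine ⟨c, hc0, hcm, ?_⟩
    have hfail := hlargest k (j k - 1) (by omega)
    push_neg at hfail
    have hfail' : f (x k) + β * δ ^ (j k - 1) * g k < f (x k + δ ^ (j k - 1) • d k) :=
      hfail
    rw [hcs, gt_iff_lt, lt_div_iff₀ (pow_pos hd0 _)]
    nlinarith [pow_pos hd0 (j k - 1)]
  classical
  choose! c hc0 hcm hcineq using hmvt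
  apply tendsto_of_subseq_tendsto
  intro ns hns
  -- extract subsequence where d converges
  obtain ⟨dbar, -, φ, hpmono, hdconv⟩ :=
    tendsto_subseq_of_bounded
      (Metric.isBounded_closedBall (x := (0 : EuclideanSpace ℝ (Fin n))) (r := M))
      (fun k => by simpa [Metric.mem_closedBall, dist_eq_norm] using hbd (ns k))
  refine ⟨φ, ?_⟩
  set ψ : ℕ → ℕ := fun m => ns (φ m) with hpsi
  have hψtop : Tendsto ψ atTop atTop := hns.comp hpmono.tendsto_atTop
  have hxψ : Tendsto (fun m => x (ψ m)) atTop (nhds xbar) := hx.comp hψtop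
  have hdψ : Tendsto (fun m => d (ψ m)) atTop (nhds dbar) := hdconv
  set L : ℝ := ⟪gradient f xbar, dbar⟫ with hL
  have hgψ : Tendsto (fun m => g (ψ m)) atTop (nhds L) :=
    ((hGc.tendsto xbar).comp hxψ).inner hdψ
  have hL0 : L ≤ 0 := le_of_tendsto' hgψ fun m => (hdesc (ψ m)).le
  rcases eq_or_lt_of_le hL0 with hLz | hLneg
  · exact hLz ▸ hgψ
  exfalso
  set lam : ℕ → ℝ := fun m => δ ^ j (ψ m) with hlam
  have hlam0 : ∀ m, 0 < lam m := fun m => pow_pos hd0 _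
  have hdiffψ : Tendsto (fun m => f (x (ψ m)) - f (x (ψ m) + lam m • d (ψ m)))
      atTop (nhds 0) := hdiff.comp hψtop
  have hsq : ∀ m, 0 ≤ -(β * (lam m * g (ψ m))) ∧
      -(β * (lam m * g (ψ m))) ≤ f (x (ψ m)) - f (x (ψ m) + lam m • d (ψ m)) := by
    intro m
    have h1 : f (x (ψ m) + lam m • d (ψ m)) ≤ f (x (ψ m)) + β * lam m * g (ψ m) :=
      harmijo (ψ m)
    have h2 : g (ψ m) < 0 := hdesc (ψ m)
    constructor
    · linarith [mul_neg_of_pos_of_neg (mul_pos hb0 (hlam0 m)) h2]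
    · nlinarith
  have hblg : Tendsto (fun m => -(β * (lam m * g (ψ m)))) atTop (nhds 0) :=
    squeeze_zero (fun m => (hsq m).1) (fun m => (hsq m).2) hdiffψ
  have hbne : β ≠ 0 := hb0.ne'
  have hlg : Tendsto (fun m => lam m * g (ψ m)) atTop (nhds 0) := by
    have h := hblg.const_mul (-β⁻¹)
    simp only [mul_neg, neg_neg, mul_zero, neg_zero] at h
    refine h.congr fun m => ?_
    field_simp
  have hlamto : Tendsto lam atTop (nhds 0) := by
    have hgne : ∀ᶠ m in atTop, g (ψ m) ≠ 0 :=
      hgψ.eventually (eventually_ne_nhds hLneg.ne)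
    have h : Tendsto (fun m => (lam m * g (ψ m)) / g (ψ m)) atTop (nhds (0 / L)) :=
      hlg.div hgψ hLneg.ne
    rw [zero_div] at h
    refine h.congr' ?_
    filter_upwards [hgne] with m hm
    field_simp
  have hjev : ∀ᶠ m in atTop, 1 ≤ j (ψ m) := by
    filter_upwards [hlamto.eventually (eventually_lt_nhds one_pos)] with m h
    by_contra hcon
    push_neg at hcon
    have hj0 : j (ψ m) = 0 := by omega
    simp [hlam, hj0] at h
  have hcev : ∀ᶠ m in atTop, 0 < c (ψ m) ∧ c (ψ m) < δ ^ (j (ψ m) - 1) ∧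
      β * g (ψ m) < ⟪gradient f (x (ψ m) + c (ψ m) • d (ψ m)), d (ψ m)⟫ := by
    filter_upwards [hjev] with m h
    exact ⟨hc0 _ h, hcm _ h, hcineq _ h⟩
  have hmuto : Tendsto (fun m => δ ^ (j (ψ m) - 1)) atTop (nhds 0) := by
    have heq : ∀ᶠ m in atTop, lam m / δ = δ ^ (j (ψ m) - 1) := by
      filter_upwards [hjev] with m h
      have hjj : j (ψ m) - 1 + 1 = j (ψ m) := by omega
      rw [hlam, div_eq_iff hd0.ne', ← pow_succ, hjj]
    have h2 : Tendsto (fun m => lam m / δ) atTop (nhds (0 / δ)) := hlamto.div_const δ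
    rw [zero_div] at h2
    exact h2.congr' heq
  have hcto : Tendsto (fun m => c (ψ m)) atTop (nhds 0) :=
    squeeze_zero' (hcev.mono fun m h => h.1.le) (hcev.mono fun m h => h.2.1.le) hmuto
  have hpt : Tendsto (fun m => x (ψ m) + c (ψ m) • d (ψ m)) atTop (nhds xbar) := by
    have hsm : Tendsto (fun m => c (ψ m) • d (ψ m)) atTop
        (nhds ((0:ℝ) • dbar)) := hcto.smul hdψ
    rw [zero_smul] at hsm
    simpa using hxψ.add hsm
  have hLHS : Tendsto (fun m => ⟪gradient f (x (ψ m) + c (ψ m) • d (ψ m)), d (ψ m)⟫)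
      atTop (nhds L) :=
    ((hGc.tendsto xbar).comp hpt).inner hdψ
  have hRHS : Tendsto (fun m => β * g (ψ m)) atTop (nhds (β * L)) :=
    hgψ.const_mul β
  have hle : β * L ≤ L :=
    le_of_tendsto_of_tendsto hRHS hLHS (hcev.mono fun m h => h.2.2.le)
  nlinarith
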